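/- Let F be defined from a positive-valued sequence c : ℕ → ℕ by F(n) = ∏_{j ∣ n} c(j). If F is GCD-morphic, then c satisfies condition (C1): for all k < n with gcd(n, k) ≠ k, gcd(c(n), c(k)) = 1. -/

import Mathlib

theorem gcd_morphic_implies_C1 (c : ℕ → ℕ) (hpos : ∀ j, 1 ≤ j → 1 ≤ c j)
    (F : ℕ → ℕ) (hFdef : ∀ n, F n = ∏ j ∈ n.divisors, c j)
    (hF : ∀ n m, 1 ≤ n → 1 ≤ m → Nat.gcd (F n) (F m) = F (Nat.gcd n m)) :
    ∀ k n, 1 ≤ k → k < n → Nat.gcd n k ≠ k → Nat.gcd (c n) (c k) = 1 := by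
  intro k n hk hkn hne
  set g := Nat.gcd n k with hg
  have hgk : g ∣ k := Nat.gcd_dvd_right n k
  have hgn : g ∣ n := Nat.gcd_dvd_left n k
  have hgpos : 0 < g := Nat.gcd_pos_of_pos_right n hk
  have hkpos : 0 < k := hk
  have hnpos : 0 < n := lt_trans hkpos hkn
  have hglt : g < n := lt_of_le_of_lt (Nat.le_of_dvd hkpos hgk) hkn
  -- F g is positive
  have hFgpos : 0 < F g := by
    rw [hFdef]
    apply Finset.prod_pos
    intro j hj
    exact hpos j (Nat.pos_of_mem_divisors hj)
  -- c n * F g ∣ F n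
  have h1 : c n * F g ∣ F n := by
    rw [hFdef n, hFdef g]
    have hnot : n ∉ g.divisors := by
      intro h
      exact absurd (Nat.le_of_dvd hgpos (Nat.dvd_of_mem_divisors h)) (not_le.2 hglt)
    have hsub : insert n g.divisors ⊆ n.divisors := by
      intro j hj
      rcases Finset.mem_insert.1 hj with h | h
      · rw [h]; exact Nat.mem_divisors_self _ hnpos.ne'
      · exact Nat.mem_divisors.2 ⟨(Nat.dvd_of_mem_divisors h).trans hgn, hnpos.ne'⟩
    rw [← Finset.prod_insert hnot]
    exact Finset.prod_dvd_prod_of_subset _ _ _ hsub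
  -- c k * F g ∣ F k
  have h2 : c k * F g ∣ F k := by
    rw [hFdef k, hFdef g]
    have hnot : k ∉ g.divisors := by
      intro h
      exact hne (Nat.dvd_antisymm hgk (Nat.dvd_of_mem_divisors h))
    have hsub : insert k g.divisors ⊆ k.divisors := by
      intro j hj
      rcases Finset.mem_insert.1 hj with h | h
      · rw [h]; exact Nat.mem_divisors_self _ hkpos.ne'
      · exact Nat.mem_divisors.2 ⟨(Nat.dvd_of_mem_divisors h).trans hgk, hkpos.ne'⟩
    rw [← Finset.prod_insert hnot]
    exact Finset.prod_dvd_prod_of_subset _ _ _ hsub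
  have hd : Nat.gcd (c n) (c k) * F g ∣ F g := by
    have : Nat.gcd (c n) (c k) * F g ∣ Nat.gcd (F n) (F k) :=
      Nat.dvd_gcd ((mul_dvd_mul_right (Nat.gcd_dvd_left _ _) _).trans h1)
        ((mul_dvd_mul_right (Nat.gcd_dvd_right _ _) _).trans h2)
    rwa [hF n k hnpos hkpos] at this
  nth_rewrite 2 [← one_mul (F g)] at hd
  exact Nat.eq_one_of_dvd_one ((Nat.mul_dvd_mul_iff_right hFgpos).1 hd)
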